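/- If ε_n(x) = ε_n(y) for all n < 2m−1 and ε_{2m−1}(x) > ε_{2m−1}(y), then x ≤ y, where x, y are the sums of the corresponding alternating Cantor series. -/

import Mathlib

open Finset

/-- Product d_1 d_2 ... d_n. -/
noncomputable def P (d : ℕ → ℕ) (n : ℕ) : ℝ := ∏ i ∈ Finset.Icc 1 n, (d i : ℝ)

/-- The alternating Cantor series sum ∑_{n≥1} (-1)^n ε_n/(d_1...d_n). -/
noncomputable def negaSum (d ε : ℕ → ℕ) : ℝ :=
  ∑' n : ℕ, (-1 : ℝ) ^ (n + 1) * (ε (n + 1) : ℝ) / P d (n + 1)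

/-- a₀ = ∑_{n≥1} (-1)^{n+1}/(d_1...d_n). -/
noncomputable def a0 (d : ℕ → ℕ) : ℝ := ∑' n : ℕ, (-1 : ℝ) ^ n / P d (n + 1)

section Aux

variable {d : ℕ → ℕ} (hd : ∀ n, 1 ≤ n → 2 ≤ d n)

lemma P_zero : P d 0 = 1 := by simp [P]

lemma P_succ (n : ℕ) : P d (n + 1) = P d n * (d (n + 1) : ℝ) := by
  simp [P, Finset.prod_Icc_succ_top (Nat.le_add_left 1 n)]

include hd

lemma P_pos (n : ℕ) : 0 < P d n := by
  apply Finset.prod_pos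
  intro i hi
  have h2 := hd i (Finset.mem_Icc.mp hi).1
  have : 0 < d i := lt_of_lt_of_le (by norm_num) h2
  exact_mod_cast this

lemma P_ge (n : ℕ) : (2 : ℝ) ^ n ≤ P d n := by
  induction n with
  | zero => simp [P_zero]
  | succ k ih =>
      rw [P_succ, pow_succ]
      have h2 : (2 : ℝ) ≤ (d (k + 1) : ℝ) := by exact_mod_cast hd (k + 1) (Nat.le_add_left 1 k)
      have hPk : (0 : ℝ) < P d k := P_pos hd k
      nlinarith [pow_pos (show (0:ℝ) < 2 by norm_num) k]

lemma one_div_P_le (n : ℕ) : 1 / P d n ≤ (1 / 2 : ℝ) ^ n := by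
  rw [div_pow, one_pow]
  exact one_div_le_one_div_of_le (pow_pos (by norm_num) n) (P_ge hd n)

lemma key_telescope (n : ℕ) :
    ((d (n + 1) : ℝ) - 1) / P d (n + 1) = 1 / P d n - 1 / P d (n + 1) := by
  have h1 : P d n ≠ 0 := ne_of_gt (P_pos hd n)
  have h2 : (d (n + 1) : ℝ) ≠ 0 := by
    have := hd (n + 1) (Nat.le_add_left 1 n)
    positivity
  rw [P_succ]
  field_simp

lemma summable_terms (ε : ℕ → ℕ) (hε : ∀ n, 1 ≤ n → ε n ≤ d n - 1) :
    Summable (fun n : ℕ => (-1 : ℝ) ^ (n + 1) * (ε (n + 1) : ℝ) / P d (n + 1)) := by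
  apply Summable.of_norm
  refine Summable.of_nonneg_of_le (fun n => norm_nonneg _) (fun n => ?_)
    (summable_geometric_of_lt_one (r := (1/2:ℝ)) (by norm_num) (by norm_num))
  · have hP1 : (0 : ℝ) < P d (n + 1) := P_pos hd (n + 1)
    have hε' : (ε (n + 1) : ℝ) ≤ (d (n + 1) : ℝ) := by
      have h := hε (n + 1) (Nat.le_add_left 1 n)
      have : ε (n + 1) ≤ d (n + 1) := le_trans h (Nat.sub_le _ _)
      exact_mod_cast this
    have : ‖(-1 : ℝ) ^ (n + 1) * (ε (n + 1) : ℝ) / P d (n + 1)‖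
        = (ε (n + 1) : ℝ) / P d (n + 1) := by
      rw [norm_div, norm_mul, norm_pow, norm_neg, norm_one, one_pow, one_mul,
        Real.norm_natCast, Real.norm_of_nonneg hP1.le]
    rw [this]
    have hPn : (0 : ℝ) < P d n := P_pos hd n
    have hdne : (d (n + 1) : ℝ) ≠ 0 := by
      have := hd (n + 1) (Nat.le_add_left 1 n); positivity
    calc (ε (n + 1) : ℝ) / P d (n + 1) ≤ (d (n + 1) : ℝ) / P d (n + 1) :=
          (div_le_div_iff_of_pos_right hP1).mpr hε'
      _ = 1 / P d n := by rw [P_succ]; field_simp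
      _ ≤ (1 / 2 : ℝ) ^ n := one_div_P_le hd n

lemma telescope_hasSum (M : ℕ) :
    HasSum (fun i : ℕ => 1 / P d (M + i) - 1 / P d (M + i + 1)) (1 / P d M) := by
  have hnonneg : ∀ i : ℕ, 0 ≤ 1 / P d (M + i) - 1 / P d (M + i + 1) := by
    intro i
    have h1 := P_pos hd (M + i)
    have h2' : (2 : ℝ) ≤ (d (M + i + 1) : ℝ) := by
      exact_mod_cast hd (M + i + 1) (Nat.le_add_left 1 (M + i))
    have hmono : P d (M + i) ≤ P d (M + i + 1) := by
      rw [P_succ]; nlinarith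
    have := one_div_le_one_div_of_le h1 hmono
    exact sub_nonneg.mpr this
  have hpart : ∀ n : ℕ, ∑ i ∈ Finset.range n, (1 / P d (M + i) - 1 / P d (M + i + 1))
      = 1 / P d M - 1 / P d (M + n) :=
    fun n => Finset.sum_range_sub' (fun i => 1 / P d (M + i)) n
  have hsummable : Summable (fun i : ℕ => 1 / P d (M + i) - 1 / P d (M + i + 1)) := by
    apply summable_of_sum_range_le hnonneg
    intro n
    rw [hpart]
    have h3 : (0 : ℝ) < 1 / P d (M + n) := by
      have := P_pos hd (M + n); positivity
    exact sub_le_self _ h3.le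
  rw [hsummable.hasSum_iff_tendsto_nat]
  have htend : Filter.Tendsto (fun n : ℕ => 1 / P d (M + n)) Filter.atTop (nhds 0) := by
    have hub : ∀ n : ℕ, 1 / P d (M + n) ≤ (1 / 2 : ℝ) ^ n := fun n =>
      le_trans (one_div_P_le hd (M + n))
        (pow_le_pow_of_le_one (by norm_num) (by norm_num) (Nat.le_add_left n M))
    exact squeeze_zero (fun n => le_of_lt (by have := P_pos hd (M + n); positivity)) hub
      (tendsto_pow_atTop_nhds_zero_of_lt_one (by norm_num) (by norm_num))
  have := Filter.Tendsto.const_sub (1 / P d M) htend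
  simp only [sub_zero] at this
  convert this using 2 with n
  exact hpart n

end Aux

set_option maxHeartbeats 1000000 in
theorem alternating_cantor_le_of_odd_digit_gt (d ε η : ℕ → ℕ) (m : ℕ)
    (hm : 1 ≤ m) (hd : ∀ n, 1 ≤ n → 2 ≤ d n)
    (hε : ∀ n, 1 ≤ n → ε n ≤ d n - 1) (hη : ∀ n, 1 ≤ n → η n ≤ d n - 1)
    (hagree : ∀ n, n < 2 * m - 1 → ε n = η n)
    (hgt : ε (2 * m - 1) > η (2 * m - 1)) :
    negaSum d ε ≤ negaSum d η := by
  set N := 2 * m - 2 with hNdef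
  have hM : 2 * m - 1 = N + 1 := by omega
  set f : ℕ → ℝ := fun n =>
    (-1 : ℝ) ^ (n + 1) * ((ε (n + 1) : ℝ) - (η (n + 1) : ℝ)) / P d (n + 1) with hf
  have hsε := summable_terms hd ε hε
  have hsη := summable_terms hd η hη
  have hfeq : ∀ n : ℕ, f n = (-1 : ℝ) ^ (n + 1) * (ε (n + 1) : ℝ) / P d (n + 1)
      - (-1 : ℝ) ^ (n + 1) * (η (n + 1) : ℝ) / P d (n + 1) := by
    intro n; simp only [hf]; ring
  have hsf : Summable f := by
    have h := hsε.sub hsη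
    apply h.congr
    intro n; exact (hfeq n).symm
  have hdiff : negaSum d ε - negaSum d η = ∑' n, f n := by
    rw [negaSum, negaSum, ← hsε.tsum_sub hsη]
    exact (tsum_congr hfeq).symm
  rw [← sub_nonpos, hdiff]
  have hsplit := hsf.sum_add_tsum_nat_add (N + 1)
  rw [← hsplit]
  have hzero : ∀ i ∈ Finset.range N, f i = 0 := by
    intro i hi
    have hi' : i < N := Finset.mem_range.mp hi
    have : ε (i + 1) = η (i + 1) := hagree (i + 1) (by omega)
    simp [hf, this]
  have hfin : ∑ i ∈ Finset.range (N + 1), f i = f N := by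
    rw [Finset.sum_range_succ, Finset.sum_eq_zero hzero, zero_add]
  rw [hfin]
  have hPpos : (0 : ℝ) < P d (N + 1) := P_pos hd (N + 1)
  have hoddpow : (-1 : ℝ) ^ (N + 1) = -1 := by
    have hodd : Odd (N + 1) := ⟨m - 1, by omega⟩
    exact hodd.neg_one_pow
  have hge1 : (1 : ℝ) ≤ (ε (N + 1) : ℝ) - (η (N + 1) : ℝ) := by
    rw [← hM]
    have h1 : η (2 * m - 1) + 1 ≤ ε (2 * m - 1) := hgt
    have h2 : ((η (2 * m - 1) : ℝ)) + 1 ≤ (ε (2 * m - 1) : ℝ) := by exact_mod_cast h1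
    linarith
  have hfN : f N ≤ -(1 / P d (N + 1)) := by
    have h3 : 1 / P d (N + 1) ≤ ((ε (N + 1) : ℝ) - (η (N + 1) : ℝ)) / P d (N + 1) :=
      (div_le_div_iff_of_pos_right hPpos).mpr hge1
    have h4 : f N = -(((ε (N + 1) : ℝ) - (η (N + 1) : ℝ)) / P d (N + 1)) := by
      simp only [hf, hoddpow]; ring
    rw [h4]
    exact neg_le_neg h3
  have hnormf : Summable (fun n => ‖f n‖) := by
    simpa only [Real.norm_eq_abs] using summable_abs_iff.mpr hsf
  have hnorms : Summable (fun i : ℕ => ‖f (i + (N + 1))‖) :=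
    (summable_nat_add_iff (N + 1)).mpr hnormf
  have htel := telescope_hasSum hd (N + 1)
  have hbound : ∀ i : ℕ, ‖f (i + (N + 1))‖
      ≤ 1 / P d ((N + 1) + i) - 1 / P d ((N + 1) + i + 1) := by
    intro i
    set k := (N + 1) + i + 1 with hk
    have hk1 : i + (N + 1) + 1 = k := by omega
    have hPk : (0 : ℝ) < P d k := P_pos hd k
    have hεk : (ε k : ℝ) ≤ (d k : ℝ) - 1 := by
      have h1 : ε k + 1 ≤ d k := by
        have h2 := hε k (by omega)
        have h3 := hd k (by omega)
        omega
      have h2 := (Nat.cast_le (α := ℝ)).mpr h1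
      push_cast at h2; linarith
    have hηk : (η k : ℝ) ≤ (d k : ℝ) - 1 := by
      have h1 : η k + 1 ≤ d k := by
        have h2 := hη k (by omega)
        have h3 := hd k (by omega)
        omega
      have h2 := (Nat.cast_le (α := ℝ)).mpr h1
      push_cast at h2; linarith
    have habs : |(ε k : ℝ) - (η k : ℝ)| ≤ (d k : ℝ) - 1 := by
      rw [abs_sub_le_iff]
      constructor
      · have : (0 : ℝ) ≤ (η k : ℝ) := Nat.cast_nonneg _
        linarith
      · have : (0 : ℝ) ≤ (ε k : ℝ) := Nat.cast_nonneg _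
        linarith
    have hnorm : ‖f (i + (N + 1))‖ = |(ε k : ℝ) - (η k : ℝ)| / P d k := by
      simp only [hf, hk1]
      rw [norm_div, norm_mul, norm_pow, norm_neg, norm_one, one_pow, one_mul,
        Real.norm_of_nonneg hPk.le]
      rfl
    rw [hnorm]
    have h5 : ((d k : ℝ) - 1) / P d k = 1 / P d ((N + 1) + i) - 1 / P d k := by
      have h6 := key_telescope hd ((N + 1) + i)
      simpa [hk] using h6
    calc |(ε k : ℝ) - (η k : ℝ)| / P d k ≤ ((d k : ℝ) - 1) / P d k :=
          (div_le_div_iff_of_pos_right hPk).mpr habs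
      _ = 1 / P d ((N + 1) + i) - 1 / P d ((N + 1) + i + 1) := h5
  have htail : ∑' i : ℕ, f (i + (N + 1)) ≤ 1 / P d (N + 1) := by
    calc ∑' i : ℕ, f (i + (N + 1)) ≤ ‖∑' i : ℕ, f (i + (N + 1))‖ := Real.le_norm_self _
      _ ≤ ∑' i : ℕ, ‖f (i + (N + 1))‖ := norm_tsum_le_tsum_norm hnorms
      _ ≤ ∑' i : ℕ, (1 / P d ((N + 1) + i) - 1 / P d ((N + 1) + i + 1)) :=
          Summable.tsum_le_tsum hbound hnorms htel.summable
      _ = 1 / P d (N + 1) := htel.tsum_eq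
  linarith
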